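/- (Permutation lemma, formal version) Let F̂ ∈ GL_p(C[[z]]) be an invertible formal power series matrix and K = diag(k_1, ..., k_p) a diagonal integer matrix. Then there exist a matrix T(z) with entries polynomial in 1/z whose determinant is a nonzero monomial c z^{-m}, a matrix Ĥ ∈ GL_p(C[[z]]), and a diagonal matrix D obtained from K by permuting its diagonal entries, such that T(z) z^K F̂(z) = Ĥ(z) z^D. -/

import Mathlib

open Matrix

lemma snoc_castLE' {m l : ℕ} {p : ℕ} (f : Fin m → Fin p) (c : Fin p) (hl : l ≤ m) (a : Fin l) :
    (Fin.snoc f c : Fin (m+1) → Fin p) (Fin.castLE (hl.trans (Nat.le_succ m)) a)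
      = f (Fin.castLE hl a) := by
  have h1 : (Fin.castLE (hl.trans (Nat.le_succ m)) a) = Fin.castSucc (Fin.castLE hl a) := by
    ext; rfl
  rw [h1, Fin.snoc_castSucc]

lemma exists_good_perm (p : ℕ) (F0 : Matrix (Fin p) (Fin p) ℂ) (hF0 : IsUnit F0)
    (k : Fin p → ℤ) :
    ∃ σ : Equiv.Perm (Fin p), ∀ c : ℤ, ∀ φ : Fin p → ℂ, ∃ x : Fin p → ℂ,
      (∀ j, x j ≠ 0 → c ≤ k j) ∧ (∀ j', c ≤ k (σ j') → ∑ j, x j * F0 j j' = φ j') := by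
  classical
  set ρ : Equiv.Perm (Fin p) := Tuple.sort (fun a => -k a) with hρ
  have hanti : ∀ a b : Fin p, a ≤ b → k (ρ b) ≤ k (ρ a) := by
    intro a b hab
    have := Tuple.monotone_sort (fun a => -k a) hab
    simpa using this
  have key : ∀ m : ℕ, (hm : m ≤ p) → ∃ f : Fin m → Fin p,
      ∀ l : ℕ, (hl : l ≤ m) → LinearIndependent ℂ
        (fun a : Fin l => fun b : Fin l =>
          F0 (ρ (Fin.castLE (hl.trans hm) b)) (f (Fin.castLE hl a))) := by
    intro m
    induction m with
    | zero =>
      intro _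
      refine ⟨Fin.elim0, ?_⟩
      intro l hl
      interval_cases l
      exact linearIndependent_empty_type
    | succ m ih =>
      intro hm1
      obtain ⟨f, hf⟩ := ih (Nat.le_of_succ_le hm1)
      set v' : Fin m → (Fin (m + 1) → ℂ) := fun a b =>
        F0 (ρ (Fin.castLE hm1 b)) (f a) with hv'
      have hv'indep : LinearIndependent ℂ v' := by
        have h0 := hf m le_rfl
        have hEq : (⇑(LinearMap.funLeft ℂ ℂ (Fin.castSucc (n := m)))) ∘ v' =
            (fun a : Fin m => fun b : Fin m =>
              F0 (ρ (Fin.castLE ((le_rfl : m ≤ m).trans (Nat.le_of_succ_le hm1)) b))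
                (f (Fin.castLE le_rfl a))) := by
          funext a b
          simp only [Function.comp_apply, LinearMap.funLeft_apply, hv']
          rfl
        refine LinearIndependent.of_comp (LinearMap.funLeft ℂ ℂ Fin.castSucc) ?_
        rw [hEq]
        exact h0
      have hnew : ∃ cnew : Fin p,
          (fun b : Fin (m+1) => F0 (ρ (Fin.castLE hm1 b)) cnew) ∉
            Submodule.span ℂ (Set.range v') := by
        by_contra hcon
        push_neg at hcon
        have hsp : ∀ y : Fin (m+1) → ℂ, y ∈ Submodule.span ℂ (Set.range v') := by
          intro y
          have hsurj : Function.Surjective F0.mulVec :=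
            Matrix.mulVec_surjective_iff_isUnit.2 hF0
          set e : Fin (m+1) → Fin p := fun b => ρ (Fin.castLE hm1 b) with he
          have hei : Function.Injective e := by
            intro a b hab
            exact Fin.castLE_injective hm1 (ρ.injective hab)
          set Y : Fin p → ℂ := fun i => if h : ∃ b, e b = i then y h.choose else 0 with hY
          have hYe : ∀ b, Y (e b) = y b := by
            intro b
            have h : ∃ b', e b' = e b := ⟨b, rfl⟩
            have hh := h.choose_spec
            simp only [hY, dif_pos h]
            congr 1
            exact hei hh
          obtain ⟨x, hx⟩ := hsurj Y
          have hy : y = ∑ c : Fin p, x c • (fun b : Fin (m+1) => F0 (e b) c) := by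
            funext b
            have hb := congrFun hx (e b)
            simp only [Matrix.mulVec, dotProduct] at hb
            rw [← hYe b, ← hb]
            simp [mul_comm]
          rw [hy]
          exact Submodule.sum_mem _ (fun c _ => Submodule.smul_mem _ _ (hcon c))
        have hle : (⊤ : Submodule ℂ (Fin (m+1) → ℂ)) ≤ Submodule.span ℂ (Set.range v') :=
          fun y _ => hsp y
        have h1 : Module.finrank ℂ (Fin (m+1) → ℂ) ≤
            Module.finrank ℂ (Submodule.span ℂ (Set.range v')) := by
          simpa using Submodule.finrank_mono hle
        have h2 : Module.finrank ℂ (Submodule.span ℂ (Set.range v')) ≤ m := by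
          have h := finrank_span_le_card (R := ℂ) (Set.range v')
          refine h.trans ?_
          rw [Set.toFinset_range]
          exact (Finset.card_image_le).trans (by simp)
        have h3 : Module.finrank ℂ (Fin (m+1) → ℂ) = m + 1 := by simp
        omega
      obtain ⟨cnew, hcnew⟩ := hnew
      refine ⟨Fin.snoc f cnew, ?_⟩
      intro l hl
      rcases Nat.lt_or_ge l (m+1) with hlm | hlm
      · have hl' : l ≤ m := Nat.lt_succ_iff.mp hlm
        have h0 := hf l hl'
        have hEq : (fun a : Fin l => fun b : Fin l =>
            F0 (ρ (Fin.castLE (hl.trans hm1) b)) ((Fin.snoc f cnew : Fin (m+1) → Fin p) (Fin.castLE hl a)))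
            = (fun a : Fin l => fun b : Fin l =>
            F0 (ρ (Fin.castLE (hl'.trans (Nat.le_of_succ_le hm1)) b)) (f (Fin.castLE hl' a))) := by
          funext a b
          congr 1
          have : Fin.castLE hl a = Fin.castLE (hl'.trans (Nat.le_succ m)) a := by ext; rfl
          rw [this, snoc_castLE']
        rw [hEq]
        exact h0
      · have hl' : l = m + 1 := le_antisymm hl hlm
        subst hl'
        have hEq : (fun a : Fin (m+1) => fun b : Fin (m+1) =>
            F0 (ρ (Fin.castLE (hl.trans hm1) b)) ((Fin.snoc f cnew : Fin (m+1) → Fin p) (Fin.castLE hl a)))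
            = Fin.snoc v' (fun b : Fin (m+1) => F0 (ρ (Fin.castLE hm1 b)) cnew) := by
          funext a
          refine Fin.lastCases ?_ ?_ a
          · show (fun b : Fin (m+1) => F0 (ρ (Fin.castLE hm1 b))
              ((Fin.snoc f cnew : Fin (m+1) → Fin p) (Fin.last m))) = _
            rw [Fin.snoc_last, Fin.snoc_last]
          · intro i
            rw [Fin.snoc_castSucc]
            show (fun b : Fin (m+1) => F0 (ρ (Fin.castLE hm1 b))
              ((Fin.snoc f cnew : Fin (m+1) → Fin p) (Fin.castSucc i))) = v' i
            rw [Fin.snoc_castSucc]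
        rw [hEq]
        exact linearIndependent_fin_snoc.2 ⟨hv'indep, hcnew⟩
  obtain ⟨f, hf⟩ := key p le_rfl
  have hfinj : Function.Injective f := by
    have hinj := (hf p le_rfl).injective
    intro a b hab
    apply hinj
    show (fun b' : Fin p => F0 (ρ b') (f a)) = fun b' : Fin p => F0 (ρ b') (f b)
    rw [hab]
  have hfbij : Function.Bijective f := Finite.injective_iff_bijective.mp hfinj
  set fe : Fin p ≃ Fin p := Equiv.ofBijective f hfbij with hfe
  refine ⟨fe.symm.trans ρ, ?_⟩  -- σ := ρ ∘ f⁻¹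
  intro c φ
  set S : Finset (Fin p) := Finset.univ.filter (fun b => c ≤ k (ρ b)) with hS
  set m : ℕ := S.card with hmdef
  have hm : m ≤ p := by
    have := Finset.card_filter_le Finset.univ (fun b => c ≤ k (ρ b))
    simpa [hmdef, hS] using this
  have hchar : ∀ b : Fin p, c ≤ k (ρ b) ↔ b.1 < m := by
    intro b
    constructor
    · intro hb
      have hsub : Finset.Iic b ⊆ S := by
        intro x hx
        simp only [Finset.mem_Iic] at hx
        simp only [hS, Finset.mem_filter, Finset.mem_univ, true_and]
        exact le_trans hb (hanti x b hx) |>.trans (le_refl _) |>.trans (le_refl _) |>.trans (le_refl _) |>.trans (le_refl _)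
      have := Finset.card_le_card hsub
      rw [Fin.card_Iic] at this
      omega
    · intro hb
      by_contra hc
      push_neg at hc
      have hsub : S ⊆ Finset.Iio b := by
        intro x hx
        simp only [hS, Finset.mem_filter, Finset.mem_univ, true_and] at hx
        simp only [Finset.mem_Iio]
        by_contra hxb
        push_neg at hxb
        exact absurd (le_trans hx (hanti b x hxb)) (not_le.mpr hc)
      have := Finset.card_le_card hsub
      rw [Fin.card_Iio] at this
      omega
  set A : Matrix (Fin m) (Fin m) ℂ := fun a b => F0 (ρ (Fin.castLE hm b)) (f (Fin.castLE hm a))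
    with hA
  have hAunit : IsUnit A := by
    rw [← Matrix.linearIndependent_rows_iff_isUnit]
    exact hf m hm
  obtain ⟨y, hy⟩ := Matrix.mulVec_surjective_iff_isUnit.2 hAunit
    (fun a => φ (f (Fin.castLE hm a)))
  refine ⟨fun j => ∑ b : Fin m, if j = ρ (Fin.castLE hm b) then y b else 0, ?_, ?_⟩
  · intro j hj
    have : ∃ b : Fin m, (if j = ρ (Fin.castLE hm b) then y b else 0) ≠ 0 := by
      by_contra hcon
      push_neg at hcon
      exact hj (Finset.sum_eq_zero (fun b _ => hcon b))
    obtain ⟨b, hb⟩ := this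
    have hjb : j = ρ (Fin.castLE hm b) := by
      by_contra hne
      rw [if_neg hne] at hb
      exact hb rfl
    rw [hjb]
    exact (hchar (Fin.castLE hm b)).2 (by simpa using b.2)
  · intro j' hj'
    -- identify j' as f of a prefix element
    have hj'2 : c ≤ k (ρ (fe.symm j')) := hj'
    have hlt : (fe.symm j').1 < m := (hchar _).1 hj'2
    set a : Fin m := ⟨(fe.symm j').1, hlt⟩ with ha
    have hcast : Fin.castLE hm a = fe.symm j' := by ext; rfl
    have hj'f : j' = f (Fin.castLE hm a) := by
      rw [hcast]
      have : fe (fe.symm j') = j' := fe.apply_symm_apply j'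
      exact this.symm
    have hsum : ∑ j, (∑ b : Fin m, if j = ρ (Fin.castLE hm b) then y b else 0) * F0 j j'
        = ∑ b : Fin m, y b * F0 (ρ (Fin.castLE hm b)) j' := by
      simp only [Finset.sum_mul]
      rw [Finset.sum_comm]
      apply Finset.sum_congr rfl
      intro b _
      calc ∑ j, (if j = ρ (Fin.castLE hm b) then y b else 0) * F0 j j'
          = ∑ j, (if j = ρ (Fin.castLE hm b) then y b * F0 j j' else 0) := by
            apply Finset.sum_congr rfl; intro j _; split <;> simp
        _ = y b * F0 (ρ (Fin.castLE hm b)) j' := by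
            rw [Finset.sum_ite_eq']; simp
    rw [hsum, hj'f]
    have := congrFun hy a
    simp only [Matrix.mulVec, dotProduct, hA] at this
    rw [← this]
    apply Finset.sum_congr rfl
    intro b _
    ring

open PowerSeries in
lemma coeff_monomial_mul' (D n : ℕ) (c : ℂ) (F : PowerSeries ℂ) :
    PowerSeries.coeff n ((PowerSeries.monomial D c) * F)
      = if D ≤ n then c * PowerSeries.coeff (n - D) F else 0 := by
  rw [PowerSeries.coeff_mul]
  rcases le_or_gt D n with h | h
  · rw [if_pos h]
    rw [Finset.sum_eq_single_of_mem (D, n - D)]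
    · rw [PowerSeries.coeff_monomial, if_pos rfl]
    · rw [Finset.HasAntidiagonal.mem_antidiagonal]; omega
    · rintro ⟨a, b⟩ hab hne
      rw [Finset.HasAntidiagonal.mem_antidiagonal] at hab
      rw [PowerSeries.coeff_monomial]
      have : a ≠ D := by
        intro h'
        apply hne
        simp only [h'] at hab ⊢
        rw [Prod.mk.injEq]
        omega
      rw [if_neg this, zero_mul]
  · rw [if_neg (not_le.mpr h)]
    apply Finset.sum_eq_zero
    rintro ⟨a, b⟩ hab
    rw [Finset.HasAntidiagonal.mem_antidiagonal] at hab
    rw [PowerSeries.coeff_monomial, if_neg (by omega), zero_mul]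

lemma exists_row (p : ℕ) (Fhat : Matrix (Fin p) (Fin p) (PowerSeries ℂ)) (k : Fin p → ℤ)
    (σ : Equiv.Perm (Fin p))
    (hsurj : ∀ c : ℤ, ∀ φ : Fin p → ℂ, ∃ x : Fin p → ℂ,
      (∀ j, x j ≠ 0 → c ≤ k j) ∧
      (∀ j', c ≤ k (σ j') →
        ∑ j, x j * PowerSeries.constantCoeff (Fhat j j') = φ j'))
    (i : Fin p) (D : ℕ) :
    ∃ Srow : Fin p → Polynomial ℂ,
      (∀ j n, (Srow j).coeff n ≠ 0 → (n : ℤ) ≤ k j - k (σ i)) ∧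
      (∀ j, k j = k (σ i) → Srow j = if j = σ i then 1 else 0) ∧
      (∀ j' (n : ℕ), n < D → (n : ℤ) < k (σ j') - k (σ i) →
        PowerSeries.coeff n (∑ l, (Srow l : PowerSeries ℂ) * Fhat l j') = 0) := by
  classical
  induction D with
  | zero =>
    refine ⟨fun j => if j = σ i then 1 else 0, ?_, ?_, ?_⟩
    · intro j n hn
      simp only at hn
      by_cases hj : j = σ i
      · rw [if_pos hj] at hn
        have hn0 : n = 0 := by
          by_contra h0
          rw [Polynomial.coeff_one, if_neg h0] at hn
          exact hn rfl
        subst hn0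
        rw [hj]
        simp
      · rw [if_neg hj] at hn
        simp at hn
    · intro j _; rfl
    · intro j' n hn; omega
  | succ D ih =>
    obtain ⟨Srow, hsupp, hnorm, hconstr⟩ := ih
    obtain ⟨x, hxsupp, hxeq⟩ := hsurj (k (σ i) + D + 1)
      (fun j' => -(PowerSeries.coeff D (∑ l, (Srow l : PowerSeries ℂ) * Fhat l j')))
    refine ⟨fun j => Srow j + Polynomial.monomial D (x j), ?_, ?_, ?_⟩
    · intro j n hn
      rw [Polynomial.coeff_add] at hn
      by_cases h1 : (Srow j).coeff n ≠ 0
      · exact hsupp j n h1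
      · push_neg at h1
        rw [h1, zero_add, Polynomial.coeff_monomial] at hn
        have hnD : n = D := by by_contra h; rw [if_neg (Ne.symm h)] at hn; exact hn rfl
        subst hnD
        have hx : x j ≠ 0 := by rwa [if_pos rfl] at hn
        have := hxsupp j hx
        omega
    · intro j hj
      have hx : x j = 0 := by
        by_contra hx
        have := hxsupp j hx
        omega
      simp only [hx, Polynomial.monomial_zero_right, add_zero]
      exact hnorm j hj
    · intro j' n hn hlt
      have hsplit : (∑ l, ((Srow l + Polynomial.monomial D (x l) : Polynomial ℂ) :
            PowerSeries ℂ) * Fhat l j')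
          = (∑ l, (Srow l : PowerSeries ℂ) * Fhat l j')
            + ∑ l, (PowerSeries.monomial D (x l)) * Fhat l j' := by
        rw [← Finset.sum_add_distrib]
        apply Finset.sum_congr rfl
        intro l _
        rw [Polynomial.coe_add, Polynomial.coe_monomial, add_mul]
      rw [hsplit, map_add]
      rcases Nat.lt_or_ge n D with hnD | hnD
      · rw [hconstr j' n hnD hlt, zero_add, map_sum]
        apply Finset.sum_eq_zero
        intro l _
        rw [coeff_monomial_mul', if_neg (by omega)]
      · have hnD' : n = D := by omega
        subst hnD'
        have hcor : ∀ l, PowerSeries.coeff n ((PowerSeries.monomial n (x l)) * Fhat l j')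
            = x l * PowerSeries.constantCoeff (Fhat l j') := by
          intro l
          rw [coeff_monomial_mul', if_pos le_rfl, Nat.sub_self]
          rw [PowerSeries.coeff_zero_eq_constantCoeff]
        have h2 : PowerSeries.coeff n (∑ l, (PowerSeries.monomial n (x l)) * Fhat l j')
            = ∑ l, x l * PowerSeries.constantCoeff (Fhat l j') := by
          rw [map_sum]
          exact Finset.sum_congr rfl (fun l _ => hcor l)
        rw [h2, hxeq j' (by omega)]
        ring

lemma prod_single' {q : ℕ} (g : Fin q → ℤ) :
    (∏ a, (HahnSeries.single (g a) (1:ℂ) : LaurentSeries ℂ))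
      = HahnSeries.single (∑ a, g a) 1 := by
  induction q with
  | zero => simp [HahnSeries.single_zero_one]
  | succ n ih =>
    rw [Fin.prod_univ_succ, Fin.sum_univ_succ, ih, HahnSeries.single_mul_single, one_mul]

lemma ofPS_X_pow (n : ℕ) :
    (HahnSeries.ofPowerSeries ℤ ℂ) (PowerSeries.X ^ n)
      = HahnSeries.single (n : ℤ) (1 : ℂ) := by
  rw [map_pow, HahnSeries.ofPowerSeries_X, HahnSeries.single_pow]
  simp

lemma exists_preimage (m : ℤ) (F : PowerSeries ℂ)
    (h : ∀ n : ℕ, (n : ℤ) < -m → PowerSeries.coeff n F = 0) :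
    ∃ y : PowerSeries ℂ, (HahnSeries.ofPowerSeries ℤ ℂ) y
      = (HahnSeries.single m 1 : LaurentSeries ℂ) * (HahnSeries.ofPowerSeries ℤ ℂ) F := by
  rcases le_or_gt 0 m with hm | hm
  · refine ⟨PowerSeries.X ^ m.toNat * F, ?_⟩
    rw [_root_.map_mul, ofPS_X_pow, show ((m.toNat : ℤ)) = m by omega]
  · have hdvd : PowerSeries.X ^ (-m).toNat ∣ F :=
      PowerSeries.X_pow_dvd_iff.2 (fun n hn => h n (by omega))
    obtain ⟨y, hy⟩ := hdvd
    refine ⟨y, ?_⟩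
    rw [hy, _root_.map_mul, ofPS_X_pow, ← mul_assoc, HahnSeries.single_mul_single, one_mul,
      show m + ((-m).toNat : ℤ) = 0 by omega, HahnSeries.single_zero_one, one_mul]

/-- permutation lemma, formal version.  Let `F̂ ∈ GL_p(ℂ[[z]])` and
`K = diag(k₁,…,k_p)` a diagonal integer matrix.  Then there exist a matrix `T(z)` with entries
polynomial in `1/z` whose determinant is a nonzero monomial `c z^{-m}`, an invertible
`Ĥ ∈ GL_p(ℂ[[z]])`, and a permutation `σ` (giving `D = diag(k_{σ(1)},…,k_{σ(p)})`), such that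
`T(z) z^K F̂(z) = Ĥ(z) z^D`. -/
theorem stmt_9 (p : ℕ) (Fhat : Matrix (Fin p) (Fin p) (PowerSeries ℂ))
    (hFhat : IsUnit Fhat.det) (k : Fin p → ℤ) :
    ∃ (T : Matrix (Fin p) (Fin p) (LaurentSeries ℂ))
      (Hhat : Matrix (Fin p) (Fin p) (PowerSeries ℂ)) (σ : Equiv.Perm (Fin p)),
      (∀ i j, ∃ q : Polynomial ℂ,
        T i j = Polynomial.eval₂ (algebraMap ℂ (LaurentSeries ℂ))
          (HahnSeries.single (-1 : ℤ) 1) q) ∧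
      (∃ (cst : ℂ) (m : ℕ), cst ≠ 0 ∧ T.det = HahnSeries.single (-(m : ℤ)) cst) ∧
      IsUnit Hhat.det ∧
      T * Matrix.diagonal (fun i => (HahnSeries.single (k i) 1 : LaurentSeries ℂ)) *
          (Fhat.map (HahnSeries.ofPowerSeries ℤ ℂ)) =
        (Hhat.map (HahnSeries.ofPowerSeries ℤ ℂ)) *
          Matrix.diagonal (fun i => (HahnSeries.single (k (σ i)) 1 : LaurentSeries ℂ)) := by
  classical
  have hF0unit : IsUnit (Matrix.of fun l j => PowerSeries.constantCoeff (Fhat l j)) := by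
    rw [Matrix.isUnit_iff_isUnit_det]
    have h1 : (Matrix.of fun l j => PowerSeries.constantCoeff (Fhat l j)).det
        = PowerSeries.constantCoeff Fhat.det := by
      rw [RingHom.map_det]
      rfl
    rw [h1]
    exact hFhat.map _
  obtain ⟨σ, hσ⟩ := exists_good_perm p
    (Matrix.of fun l j => PowerSeries.constantCoeff (Fhat l j)) hF0unit k
  have hrow : ∀ i : Fin p, ∃ Srow : Fin p → Polynomial ℂ,
      (∀ j n, (Srow j).coeff n ≠ 0 → (n : ℤ) ≤ k j - k (σ i)) ∧
      (∀ j, k j = k (σ i) → Srow j = if j = σ i then 1 else 0) ∧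
      (∀ j' (n : ℕ), (n : ℤ) < k (σ j') - k (σ i) →
        PowerSeries.coeff n (∑ l, (Srow l : PowerSeries ℂ) * Fhat l j') = 0) := by
    intro i
    obtain ⟨Srow, h1, h2, h3⟩ := exists_row p Fhat k σ hσ i
      ((Finset.univ.sup fun j' => (k (σ j') - k (σ i)).toNat) + 1)
    refine ⟨Srow, h1, h2, fun j' n hn => h3 j' n ?_ hn⟩
    have hle : (k (σ j') - k (σ i)).toNat ≤
        (Finset.univ.sup fun j' => (k (σ j') - k (σ i)).toNat) :=
      Finset.le_sup (f := fun j'' => (k (σ j'') - k (σ i)).toNat) (Finset.mem_univ j')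
    omega
  choose S hsupp hnorm hconstr using hrow
  have hSzero : ∀ i j, k j < k (σ i) → S i j = 0 := by
    intro i j hij
    ext n
    rw [Polynomial.coeff_zero]
    by_contra h
    have := hsupp i j n h
    omega
  -- determinant of the polynomial matrix
  set Sp : Matrix (Fin p) (Fin p) (Polynomial ℂ) := Matrix.of (fun i j => S i j) with hSp
  set τ : Equiv.Perm (Fin p) := Tuple.sort (fun i => k (σ i)) with hτ
  have hmono := Tuple.monotone_sort (fun i => k (σ i))
  have hBT : ((Sp.submatrix id ⇑σ).submatrix ⇑τ ⇑τ).BlockTriangular id := by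
    intro a b hba
    show S (τ a) (σ (τ b)) = 0
    rcases lt_trichotomy (k (σ (τ b))) (k (σ (τ a))) with h | h | h
    · exact hSzero _ _ h
    · rw [hnorm _ _ h, if_neg]
      intro hcon
      have hba' := τ.injective (σ.injective hcon)
      exact (ne_of_gt hba) hba'.symm
    · exfalso
      have hwba := hmono (le_of_lt (show b < a from hba))
      simp only [Function.comp_apply] at hwba
      rw [← hτ] at hwba
      omega
  have hdiag1 : ((Sp.submatrix id ⇑σ).submatrix ⇑τ ⇑τ).det = 1 := by
    rw [Matrix.det_of_upperTriangular hBT]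
    apply Finset.prod_eq_one
    intro a _
    show S (τ a) (σ (τ a)) = 1
    rw [hnorm _ _ rfl, if_pos rfl]
  have hsq : ((Equiv.Perm.sign σ : ℤ) : Polynomial ℂ) *
      ((Equiv.Perm.sign σ : ℤ) : Polynomial ℂ) = 1 := by
    rcases Int.units_eq_one_or (Equiv.Perm.sign σ) with h | h <;> rw [h] <;> norm_num
  have hdetSp : Sp.det = ((Equiv.Perm.sign σ : ℤ) : Polynomial ℂ) := by
    have h1 : (Sp.submatrix id ⇑σ).det
        = ((Equiv.Perm.sign σ : ℤ) : Polynomial ℂ) * Sp.det := by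
      exact_mod_cast Matrix.det_permute' σ Sp
    have h2 : (Sp.submatrix id ⇑σ).det = 1 := by
      rw [← Matrix.det_submatrix_equiv_self τ (Sp.submatrix id ⇑σ), hdiag1]
    calc Sp.det = ((Equiv.Perm.sign σ : ℤ) : Polynomial ℂ) *
          (((Equiv.Perm.sign σ : ℤ) : Polynomial ℂ) * Sp.det) := by
          rw [← mul_assoc, hsq, one_mul]
      _ = ((Equiv.Perm.sign σ : ℤ) : Polynomial ℂ) := by rw [← h1, h2, mul_one]
  -- Laurent data
  set ι : PowerSeries ℂ →+* LaurentSeries ℂ := HahnSeries.ofPowerSeries ℤ ℂ with hιdef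
  set ψ : Polynomial ℂ →+* PowerSeries ℂ := Polynomial.coeToPowerSeries.ringHom with hψdef
  set G : Matrix (Fin p) (Fin p) (PowerSeries ℂ) :=
    (Matrix.of fun i j => ψ (S i j)) * Fhat with hG
  have hGapply : ∀ i j, G i j = ∑ l, (S i l : PowerSeries ℂ) * Fhat l j := by
    intro i j
    rw [hG, Matrix.mul_apply]
    apply Finset.sum_congr rfl
    intro l _
    rfl
  have hHex : ∀ i j, ∃ y : PowerSeries ℂ, ι y
      = (HahnSeries.single (k (σ i) - k (σ j)) 1 : LaurentSeries ℂ) * ι (G i j) := by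
    intro i j
    apply exists_preimage
    intro n hn
    rw [hGapply]
    exact hconstr i j n (by omega)
  choose Hhat0 hHhat0 using hHex
  set Hhat : Matrix (Fin p) (Fin p) (PowerSeries ℂ) := Matrix.of Hhat0 with hHhatdef
  have hHhat : ∀ i j, ι (Hhat i j)
      = (HahnSeries.single (k (σ i) - k (σ j)) 1 : LaurentSeries ℂ) * ι (G i j) :=
    fun i j => hHhat0 i j
  set T : Matrix (Fin p) (Fin p) (LaurentSeries ℂ) :=
    Matrix.of (fun i j =>
      (HahnSeries.single (k (σ i) - k j) 1 : LaurentSeries ℂ) * ι (ψ (S i j))) with hT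
  have hmulsing : ∀ (a b : ℤ),
      (HahnSeries.single a 1 : LaurentSeries ℂ) * HahnSeries.single b 1
        = HahnSeries.single (a+b) 1 := by
    intro a b
    rw [HahnSeries.single_mul_single, one_mul]
  have hcomm1 : ∀ (a b : ℤ) (x y : LaurentSeries ℂ),
      (HahnSeries.single a 1 * x) * HahnSeries.single b 1 * y
        = HahnSeries.single (a+b) 1 * (x * y) := by
    intro a b x y
    rw [← hmulsing a b]
    ring
  have hcomm2 : ∀ (a b : ℤ) (x : LaurentSeries ℂ),
      HahnSeries.single a 1 * (x * HahnSeries.single b 1)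
        = HahnSeries.single (a+b) 1 * x := by
    intro a b x
    rw [← hmulsing a b]
    ring
  have hcomm3 : ∀ (a b : ℤ) (x : LaurentSeries ℂ),
      (HahnSeries.single a 1 * x) * HahnSeries.single b 1
        = HahnSeries.single (a+b) 1 * x := by
    intro a b x
    rw [← hmulsing a b]
    ring
  refine ⟨T, Hhat, σ, ?_, ?_, ?_, ?_⟩
  · -- entries of T are polynomials in z⁻¹
    intro i j
    rcases lt_or_ge (k j) (k (σ i)) with hij | hij
    · refine ⟨0, ?_⟩
      show (HahnSeries.single (k (σ i) - k j) 1 : LaurentSeries ℂ) * ι (ψ (S i j)) = _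
      rw [hSzero i j hij]
      simp
    · set M : ℕ := (k j - k (σ i)).toNat with hM
      have hMz : (M : ℤ) = k j - k (σ i) := by omega
      refine ⟨∑ m ∈ Finset.range (M+1),
        Polynomial.C ((S i j).coeff (M - m)) * Polynomial.X ^ m, ?_⟩
      have hdeg : (S i j).natDegree < M + 1 := by
        rw [Nat.lt_succ_iff, Polynomial.natDegree_le_iff_coeff_eq_zero]
        intro N hN
        by_contra h
        have := hsupp i j N h
        omega
      have hLHSterm : ∀ n : ℕ, (HahnSeries.single (k (σ i) - k j) 1 : LaurentSeries ℂ) *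
          ι (ψ (Polynomial.monomial n ((S i j).coeff n)))
          = HahnSeries.single ((n : ℤ) - (M : ℤ)) ((S i j).coeff n) := by
        intro n
        rw [← Polynomial.C_mul_X_pow_eq_monomial, _root_.map_mul, _root_.map_mul]
        rw [show ψ (Polynomial.C ((S i j).coeff n)) = PowerSeries.C ((S i j).coeff n)
          from Polynomial.coe_C _]
        rw [show ψ (Polynomial.X ^ n) = PowerSeries.X ^ n by
          rw [map_pow]
          congr 1
          exact Polynomial.coe_X]
        rw [HahnSeries.ofPowerSeries_C, ofPS_X_pow]
        rw [show (HahnSeries.C ((S i j).coeff n) : LaurentSeries ℂ)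
          = HahnSeries.single (0 : ℤ) ((S i j).coeff n) from rfl]
        rw [← mul_assoc, HahnSeries.single_mul_single, HahnSeries.single_mul_single]
        rw [mul_one, one_mul]
        rw [show k (σ i) - k j + 0 + (n:ℤ) = (n:ℤ) - (M:ℤ) by omega]
      have hRHSterm : ∀ m : ℕ, Polynomial.eval₂ (algebraMap ℂ (LaurentSeries ℂ))
          (HahnSeries.single (-1 : ℤ) 1)
          (Polynomial.C ((S i j).coeff (M - m)) * Polynomial.X ^ m)
          = HahnSeries.single (-(m : ℤ)) ((S i j).coeff (M - m)) := by
        intro m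
        rw [Polynomial.eval₂_mul, Polynomial.eval₂_C, Polynomial.eval₂_X_pow]
        rw [HahnSeries.single_pow]
        rw [show (algebraMap ℂ (LaurentSeries ℂ)) ((S i j).coeff (M - m))
          = HahnSeries.single (0 : ℤ) ((S i j).coeff (M - m)) by
            rw [show (algebraMap ℂ (LaurentSeries ℂ)) ((S i j).coeff (M - m))
              = (HahnSeries.ofPowerSeries ℤ ℂ) (PowerSeries.C ((S i j).coeff (M - m))) from rfl,
              HahnSeries.ofPowerSeries_C]
            rfl]
        rw [HahnSeries.single_mul_single]
        simp
      show (HahnSeries.single (k (σ i) - k j) 1 : LaurentSeries ℂ) * ι (ψ (S i j)) = _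
      conv_lhs => rw [Polynomial.as_sum_range' (S i j) (M+1) hdeg]
      rw [_root_.map_sum, _root_.map_sum, Finset.mul_sum]
      rw [Polynomial.eval₂_finset_sum]
      rw [Finset.sum_congr rfl (fun n _ => hLHSterm n),
        Finset.sum_congr rfl (fun m _ => hRHSterm m)]
      rw [← Finset.sum_range_reflect (fun m => HahnSeries.single (-(m : ℤ))
        ((S i j).coeff (M - m)) : ℕ → LaurentSeries ℂ) (M+1)]
      apply Finset.sum_congr rfl
      intro n hn
      rw [Finset.mem_range] at hn
      have h1 : M - (M + 1 - 1 - n) = n := by omega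
      have h2 : (-((M + 1 - 1 - n : ℕ) : ℤ)) = (n : ℤ) - (M : ℤ) := by omega
      rw [h1, h2]
  · -- determinant of T
    refine ⟨((Equiv.Perm.sign σ : ℤ) : ℂ), 0, ?_, ?_⟩
    · rcases Int.units_eq_one_or (Equiv.Perm.sign σ) with h | h <;> rw [h] <;> norm_num
    · have hTfact : T = Matrix.diagonal
            (fun i => (HahnSeries.single (k (σ i)) 1 : LaurentSeries ℂ))
          * ((Matrix.of fun i j => ι (ψ (S i j)))
            * Matrix.diagonal (fun j => (HahnSeries.single (-k j) 1 : LaurentSeries ℂ))) := by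
        funext i j
        rw [Matrix.diagonal_mul, Matrix.mul_diagonal]
        simp only [Matrix.of_apply]
        show (HahnSeries.single (k (σ i) - k j) 1 : LaurentSeries ℂ) * ι (ψ (S i j)) = _
        rw [hcomm2 (k (σ i)) (-k j) (ι (ψ (S i j)))]
        rw [show k (σ i) + -k j = k (σ i) - k j by ring]
      rw [hTfact, Matrix.det_mul, Matrix.det_mul, Matrix.det_diagonal, Matrix.det_diagonal,
        prod_single', prod_single']
      have hdet2 : (Matrix.of fun i j => ι (ψ (S i j))).det = ι (ψ (Sp.det)) := by
        rw [show (Matrix.of fun i j => ι (ψ (S i j))) = (ι.comp ψ).mapMatrix Sp from rfl,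
          ← RingHom.map_det]
        rfl
      rw [hdet2, hdetSp]
      have hconst : ι (ψ (((Equiv.Perm.sign σ : ℤ) : Polynomial ℂ)))
          = HahnSeries.single (0 : ℤ) (((Equiv.Perm.sign σ : ℤ) : ℂ)) := by
        rw [show ((Equiv.Perm.sign σ : ℤ) : Polynomial ℂ)
            = Polynomial.C (((Equiv.Perm.sign σ : ℤ) : ℂ)) from
          (Polynomial.C_eq_intCast _).symm]
        rw [show ψ (Polynomial.C (((Equiv.Perm.sign σ : ℤ) : ℂ)))
          = PowerSeries.C (((Equiv.Perm.sign σ : ℤ) : ℂ)) from Polynomial.coe_C _]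
        rw [HahnSeries.ofPowerSeries_C]
        rfl
      rw [hconst]
      rw [HahnSeries.single_mul_single, HahnSeries.single_mul_single]
      have hsum : ∑ i, k (σ i) = ∑ i, k i := Equiv.sum_comp σ k
      have hexp : (∑ i, k (σ i)) + (0 + ∑ i, -k i) = -((0:ℕ) : ℤ) := by
        rw [hsum]
        simp [Finset.sum_neg_distrib]
      rw [show (1 : ℂ) * (((Equiv.Perm.sign σ : ℤ) : ℂ) * 1)
        = ((Equiv.Perm.sign σ : ℤ) : ℂ) by ring]
      rw [← hexp]
  · -- Hhat is invertible
    have hHfact : Hhat.map ι = Matrix.diagonal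
          (fun i => (HahnSeries.single (k (σ i)) 1 : LaurentSeries ℂ))
        * (G.map ι * Matrix.diagonal
          (fun j => (HahnSeries.single (-(k (σ j))) 1 : LaurentSeries ℂ))) := by
      funext i j
      rw [Matrix.map_apply, hHhat i j, Matrix.diagonal_mul, Matrix.mul_diagonal,
        Matrix.map_apply]
      rw [hcomm2 (k (σ i)) (-(k (σ j))) (ι (G i j))]
      rw [show k (σ i) + -(k (σ j)) = k (σ i) - k (σ j) by ring]
    have hιdetH : ι Hhat.det = ι G.det := by
      have h1 : ι Hhat.det = (Hhat.map ι).det := by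
        rw [RingHom.map_det]
        rfl
      have h2 : ι G.det = (G.map ι).det := by
        rw [RingHom.map_det]
        rfl
      rw [h1, h2, hHfact, Matrix.det_mul, Matrix.det_mul, Matrix.det_diagonal,
        Matrix.det_diagonal, prod_single', prod_single']
      rw [← mul_assoc, mul_comm ((HahnSeries.single (∑ i, k (σ i)) 1 : LaurentSeries ℂ)) _,
        mul_assoc, HahnSeries.single_mul_single, one_mul]
      rw [show (∑ i, k (σ i)) + (∑ i, -(k (σ i))) = 0 by
        rw [← Finset.sum_add_distrib]; simp]
      rw [HahnSeries.single_zero_one, mul_one]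
    have hdetH : Hhat.det = G.det := HahnSeries.ofPowerSeries_injective hιdetH
    rw [hdetH, hG, Matrix.det_mul]
    have hdetSR : (Matrix.of fun i j => ψ (S i j)).det = ψ (Sp.det) := by
      rw [show (Matrix.of fun i j => ψ (S i j)) = ψ.mapMatrix Sp from rfl, ← RingHom.map_det]
    rw [hdetSR, hdetSp]
    apply IsUnit.mul
    · rw [show ψ (((Equiv.Perm.sign σ : ℤ) : Polynomial ℂ))
        = (((Equiv.Perm.sign σ : ℤ) : PowerSeries ℂ)) from map_intCast ψ _]
      rcases Int.units_eq_one_or (Equiv.Perm.sign σ) with h | h <;> rw [h] <;> simp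
    · exact hFhat
  · -- the matrix identity
    funext i j
    rw [Matrix.mul_apply]
    have hL : ∀ l, (T * Matrix.diagonal
          (fun i => (HahnSeries.single (k i) 1 : LaurentSeries ℂ))) i l
          * (Fhat.map ι) l j
        = HahnSeries.single (k (σ i)) 1 * ι (ψ (S i l) * Fhat l j) := by
      intro l
      rw [Matrix.mul_diagonal, Matrix.map_apply]
      show ((HahnSeries.single (k (σ i) - k l) 1 : LaurentSeries ℂ) * ι (ψ (S i l)))
          * HahnSeries.single (k l) 1 * ι (Fhat l j) = _
      rw [hcomm1 (k (σ i) - k l) (k l) (ι (ψ (S i l))) (ι (Fhat l j))]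
      rw [show k (σ i) - k l + k l = k (σ i) by ring, ← _root_.map_mul]
    rw [Finset.sum_congr rfl (fun l _ => hL l), ← Finset.mul_sum, ← _root_.map_sum]
    have hsumG : (∑ l, ψ (S i l) * Fhat l j) = G i j := by
      rw [hG, Matrix.mul_apply]
      rfl
    rw [hsumG]
    rw [Matrix.mul_diagonal, Matrix.map_apply, hHhat i j]
    rw [hcomm3 (k (σ i) - k (σ j)) (k (σ j)) (ι (G i j))]
    rw [show k (σ i) - k (σ j) + k (σ j) = k (σ i) by ring]
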